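/- (Robustness of the smoothness metric, Case C_i > C_e.) Let S⁽ⁱ⁾, S⁽ⁿ⁾ ∈ ℝ^N be such that the noise vector n = S⁽ⁿ⁾ − S⁽ⁱ⁾ has exactly n_f nonzero entries, each equal to 2A or −2A, where A > 0. Write C_i = SM(S⁽ⁱ⁾) and suppose C_i > C_e. If n_f < (C_i − C_e)/(2·A·D^{3/2}·√Δ + 2·A·√(Δ·D)), then SM(S⁽ⁿ⁾) > C_e; i.e., the smoothness of the noisy signal remains above the upper endpoint C_e of the random-failure prediction interval, guaranteeing correct detection of the epidemic. -/

import Mathlib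

open scoped Classical


lemma sqrt_sum_sq_add_le (N : ℕ) (f g : ℕ → ℝ) :
    Real.sqrt (∑ j ∈ Finset.range N, (f j + g j) ^ 2) ≤
      Real.sqrt (∑ j ∈ Finset.range N, (f j) ^ 2) +
      Real.sqrt (∑ j ∈ Finset.range N, (g j) ^ 2) := by
  have h := norm_add_le (E := EuclideanSpace ℝ (Fin N))
    (WithLp.toLp 2 (fun j => f j)) (WithLp.toLp 2 (fun j => g j))
  rw [← Fin.sum_univ_eq_sum_range (fun j => (f j + g j) ^ 2),
    ← Fin.sum_univ_eq_sum_range (fun j => (f j) ^ 2),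
    ← Fin.sum_univ_eq_sum_range (fun j => (g j) ^ 2)]
  simpa [EuclideanSpace.norm_eq, Real.norm_eq_abs, sq_abs] using h

lemma sqrt_sum_sq_add3_le (N : ℕ) (f g h : ℕ → ℝ) :
    Real.sqrt (∑ j ∈ Finset.range N, (f j + g j + h j) ^ 2) ≤
      Real.sqrt (∑ j ∈ Finset.range N, (f j) ^ 2) +
      Real.sqrt (∑ j ∈ Finset.range N, (g j) ^ 2) +
      Real.sqrt (∑ j ∈ Finset.range N, (h j) ^ 2) := by
  calc Real.sqrt (∑ j ∈ Finset.range N, (f j + g j + h j) ^ 2)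
      ≤ Real.sqrt (∑ j ∈ Finset.range N, (f j + g j) ^ 2) +
        Real.sqrt (∑ j ∈ Finset.range N, (h j) ^ 2) :=
        sqrt_sum_sq_add_le N (fun j => f j + g j) h
    _ ≤ _ := by
        have := sqrt_sum_sq_add_le N f g
        linarith

/-- The smoothness of a graph signal `S ∈ ℝ^N` with respect to the weighted adjacency
matrix `a`: `SM(S) = ∑_{i} (∑_{j} a(i,j)·(S(j) − S(i))²)^{1/2}`. -/
noncomputable def smoothness (N : ℕ) (a : ℕ → ℕ → ℝ) (S : ℕ → ℝ) : ℝ :=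
  ∑ i ∈ Finset.range N, Real.sqrt (∑ j ∈ Finset.range N, a i j * (S j - S i) ^ 2)

/-- **Robustness of the smoothness metric, Case `C_i > C_e`.**
If the noise vector `n = Sⁿ − Sⁱ` has exactly `n_f` nonzero entries, each equal to
`2A` or `−2A` with `A > 0`, `C_i = SM(Sⁱ) > C_e`, and
`n_f < (C_i − C_e)/(2·A·D^{3/2}·√Δ + 2·A·√(Δ·D))`, then `SM(Sⁿ) > C_e`. -/
theorem smoothness_robust_above (N : ℕ) (hN : 1 ≤ N) (a : ℕ → ℕ → ℝ)
    (hsymm : ∀ i j, a i j = a j i) (hnn : ∀ i j, 0 ≤ a i j)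
    (hdiag : ∀ i, a i i = 0)
    (Δ : ℝ) (hΔ : 0 < Δ) (haΔ : ∀ i j, a i j ≤ Δ)
    (D : ℝ) (hD : 1 ≤ D)
    (hdeg : ∀ i ∈ Finset.range N,
      ((((Finset.range N).filter (fun j => a i j ≠ 0)).card : ℝ)) ≤ D)
    (A : ℝ) (hA : 0 < A) (nf : ℕ)
    (Si Sn : ℕ → ℝ)
    (F : Finset ℕ) (hFsub : F ⊆ Finset.range N) (hFcard : F.card = nf)
    (hFval : ∀ k ∈ F, Sn k - Si k = 2 * A ∨ Sn k - Si k = -(2 * A))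
    (hF0 : ∀ k ∈ Finset.range N, k ∉ F → Sn k = Si k)
    (Ce : ℝ) (hCi : Ce < smoothness N a Si)
    (hnf : (nf : ℝ) < (smoothness N a Si - Ce) /
      (2 * A * D ^ ((3 : ℝ) / 2) * Real.sqrt Δ + 2 * A * Real.sqrt (Δ * D))) :
    smoothness N a Sn > Ce := by
  have hD0 : (0:ℝ) < D := lt_of_lt_of_le one_pos hD
  set B : ℝ := 2 * A * D ^ ((3 : ℝ) / 2) * Real.sqrt Δ + 2 * A * Real.sqrt (Δ * D) with hBdef
  have hB : 0 < B := by
    rw [hBdef]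
    have h1 : 0 < 2 * A * D ^ ((3 : ℝ) / 2) * Real.sqrt Δ := by
      have : 0 < Real.sqrt Δ := Real.sqrt_pos.mpr hΔ
      have : 0 < D ^ ((3 : ℝ) / 2) := Real.rpow_pos_of_pos hD0 _
      positivity
    have h2 : 0 ≤ 2 * A * Real.sqrt (Δ * D) := by positivity
    linarith
  have hnfB : (nf : ℝ) * B < smoothness N a Si - Ce := by
    have := (lt_div_iff₀ hB).mp hnf
    linarith
  -- count of "failed" neighbors of i
  set c : ℕ → ℕ := fun i => ((Finset.range N).filter (fun j => a i j ≠ 0 ∧ j ∈ F)).card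
    with hcdef
  -- per-node bound
  have node : ∀ i ∈ Finset.range N,
      Real.sqrt (∑ j ∈ Finset.range N, a i j * (Si j - Si i) ^ 2) ≤
        Real.sqrt (∑ j ∈ Finset.range N, a i j * (Sn j - Sn i) ^ 2) +
        (2 * A * Real.sqrt Δ * Real.sqrt (c i) + |Sn i - Si i| * Real.sqrt (Δ * D)) := by
    intro i hi
    have hsq : ∀ (j : ℕ) (t : ℝ), (Real.sqrt (a i j) * t) ^ 2 = a i j * t ^ 2 := by
      intro j t
      rw [mul_pow, Real.sq_sqrt (hnn i j)]
    have tri := sqrt_sum_sq_add3_le N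
      (fun j => Real.sqrt (a i j) * (Sn j - Sn i))
      (fun j => -(Real.sqrt (a i j) * (Sn j - Si j)))
      (fun j => Real.sqrt (a i j) * (Sn i - Si i))
    have E0 : ∑ j ∈ Finset.range N,
        (Real.sqrt (a i j) * (Sn j - Sn i) + -(Real.sqrt (a i j) * (Sn j - Si j))
          + Real.sqrt (a i j) * (Sn i - Si i)) ^ 2
        = ∑ j ∈ Finset.range N, a i j * (Si j - Si i) ^ 2 := by
      refine Finset.sum_congr rfl fun j _ => ?_
      rw [show Real.sqrt (a i j) * (Sn j - Sn i) + -(Real.sqrt (a i j) * (Sn j - Si j))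
          + Real.sqrt (a i j) * (Sn i - Si i) = Real.sqrt (a i j) * (Si j - Si i) from by
        ring, hsq]
    have E1 : ∑ j ∈ Finset.range N, (Real.sqrt (a i j) * (Sn j - Sn i)) ^ 2
        = ∑ j ∈ Finset.range N, a i j * (Sn j - Sn i) ^ 2 :=
      Finset.sum_congr rfl fun j _ => hsq j _
    have E2 : ∑ j ∈ Finset.range N, (-(Real.sqrt (a i j) * (Sn j - Si j))) ^ 2
        = ∑ j ∈ Finset.range N, a i j * (Sn j - Si j) ^ 2 := by
      refine Finset.sum_congr rfl fun j _ => ?_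
      rw [show (-(Real.sqrt (a i j) * (Sn j - Si j))) ^ 2
          = (Real.sqrt (a i j) * (Sn j - Si j)) ^ 2 from by ring, hsq]
    have E3 : ∑ j ∈ Finset.range N, (Real.sqrt (a i j) * (Sn i - Si i)) ^ 2
        = (Sn i - Si i) ^ 2 * ∑ j ∈ Finset.range N, a i j := by
      rw [Finset.mul_sum]
      refine Finset.sum_congr rfl fun j _ => ?_
      rw [hsq]; ring
    rw [E0, E1, E2, E3] at tri
    -- bound the "g"-term
    have hg : Real.sqrt (∑ j ∈ Finset.range N, a i j * (Sn j - Si j) ^ 2)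
        ≤ 2 * A * Real.sqrt Δ * Real.sqrt (c i) := by
      have hrestrict : ∑ j ∈ Finset.range N, a i j * (Sn j - Si j) ^ 2
          = ∑ j ∈ (Finset.range N).filter (fun j => a i j ≠ 0 ∧ j ∈ F),
              a i j * (Sn j - Si j) ^ 2 := by
        refine (Finset.sum_filter_of_ne ?_).symm
        intro j hj hne
        constructor
        · intro h0; apply hne; rw [h0]; ring
        · by_contra hjF
          apply hne
          rw [hF0 j hj hjF]; ring
      have hbound : ∑ j ∈ (Finset.range N).filter (fun j => a i j ≠ 0 ∧ j ∈ F),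
            a i j * (Sn j - Si j) ^ 2 ≤ (c i : ℝ) * (Δ * (2 * A) ^ 2) := by
        calc ∑ j ∈ (Finset.range N).filter (fun j => a i j ≠ 0 ∧ j ∈ F),
              a i j * (Sn j - Si j) ^ 2
            ≤ ∑ _j ∈ (Finset.range N).filter (fun j => a i j ≠ 0 ∧ j ∈ F),
              (Δ * (2 * A) ^ 2) := by
              refine Finset.sum_le_sum fun j hj => ?_
              simp only [Finset.mem_filter] at hj
              have hval : (Sn j - Si j) ^ 2 = (2 * A) ^ 2 := by
                rcases hFval j hj.2.2 with hv | hv <;> rw [hv] <;> ring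
              rw [hval]
              exact mul_le_mul_of_nonneg_right (haΔ i j) (by positivity)
          _ = (c i : ℝ) * (Δ * (2 * A) ^ 2) := by
              rw [Finset.sum_const, nsmul_eq_mul, hcdef]
      calc Real.sqrt (∑ j ∈ Finset.range N, a i j * (Sn j - Si j) ^ 2)
          ≤ Real.sqrt ((c i : ℝ) * (Δ * (2 * A) ^ 2)) := by
            rw [hrestrict] at *
            exact Real.sqrt_le_sqrt hbound
        _ = 2 * A * Real.sqrt Δ * Real.sqrt (c i) := by
            rw [Real.sqrt_mul (by positivity), Real.sqrt_mul hΔ.le,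
              Real.sqrt_sq (by positivity)]
            ring
    -- bound the "h"-term
    have hh : Real.sqrt ((Sn i - Si i) ^ 2 * ∑ j ∈ Finset.range N, a i j)
        ≤ |Sn i - Si i| * Real.sqrt (Δ * D) := by
      have hsa : ∑ j ∈ Finset.range N, a i j ≤ Δ * D := by
        have hr : ∑ j ∈ Finset.range N, a i j
            = ∑ j ∈ (Finset.range N).filter (fun j => a i j ≠ 0), a i j :=
          (Finset.sum_filter_of_ne (fun j _ hne => hne)).symm
        rw [hr]
        calc ∑ j ∈ (Finset.range N).filter (fun j => a i j ≠ 0), a i j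
            ≤ ∑ _j ∈ (Finset.range N).filter (fun j => a i j ≠ 0), Δ :=
              Finset.sum_le_sum fun j _ => haΔ i j
          _ = (((Finset.range N).filter (fun j => a i j ≠ 0)).card : ℝ) * Δ := by
              rw [Finset.sum_const, nsmul_eq_mul]
          _ ≤ D * Δ := mul_le_mul_of_nonneg_right (hdeg i hi) hΔ.le
          _ = Δ * D := mul_comm _ _
      calc Real.sqrt ((Sn i - Si i) ^ 2 * ∑ j ∈ Finset.range N, a i j)
          ≤ Real.sqrt ((Sn i - Si i) ^ 2 * (Δ * D)) :=
            Real.sqrt_le_sqrt (mul_le_mul_of_nonneg_left hsa (sq_nonneg _))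
        _ = |Sn i - Si i| * Real.sqrt (Δ * D) := by
            rw [Real.sqrt_mul (sq_nonneg _), Real.sqrt_sq_eq_abs]
    linarith
  -- sum the per-node bounds
  have key : smoothness N a Si ≤ smoothness N a Sn +
      ∑ i ∈ Finset.range N,
        (2 * A * Real.sqrt Δ * Real.sqrt (c i) + |Sn i - Si i| * Real.sqrt (Δ * D)) := by
    unfold smoothness
    rw [← Finset.sum_add_distrib]
    exact Finset.sum_le_sum node
  -- bound ∑ sqrt (c i)
  have hc1 : ∑ i ∈ Finset.range N, Real.sqrt (c i) ≤ (nf : ℝ) * D := by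
    have step1 : ∑ i ∈ Finset.range N, Real.sqrt (c i)
        ≤ ∑ i ∈ Finset.range N, (c i : ℝ) := by
      refine Finset.sum_le_sum fun i _ => ?_
      rcases Nat.eq_zero_or_pos (c i) with h0 | h0
      · rw [h0]; simp
      · have h1 : (1:ℝ) ≤ (c i : ℝ) := by exact_mod_cast h0
        calc Real.sqrt (c i) ≤ Real.sqrt (((c i : ℝ)) ^ 2) :=
              Real.sqrt_le_sqrt (by nlinarith)
          _ = (c i : ℝ) := Real.sqrt_sq (by positivity)
    have ecard : ∀ i, ((c i : ℕ) : ℝ)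
        = ∑ j ∈ Finset.range N, (if a i j ≠ 0 ∧ j ∈ F then (1:ℝ) else 0) := by
      intro i
      rw [hcdef]
      simp only [Finset.card_filter]
      push_cast
      rfl
    have step2 : ∑ i ∈ Finset.range N, (c i : ℝ) ≤ (nf : ℝ) * D := by
      have e : ∑ i ∈ Finset.range N, (c i : ℝ)
          = ∑ j ∈ Finset.range N, ∑ i ∈ Finset.range N,
              (if a i j ≠ 0 ∧ j ∈ F then (1:ℝ) else 0) := by
        rw [Finset.sum_congr rfl fun i _ => ecard i, Finset.sum_comm]
      rw [e]
      have hb : ∀ j ∈ Finset.range N,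
          (∑ i ∈ Finset.range N, (if a i j ≠ 0 ∧ j ∈ F then (1:ℝ) else 0))
          ≤ if j ∈ F then D else 0 := by
        intro j hj
        by_cases hjF : j ∈ F
        · simp only [hjF, and_true, if_true]
          have e1 : ∑ i ∈ Finset.range N, (if a i j ≠ 0 then (1:ℝ) else 0)
              = (((Finset.range N).filter (fun i => a i j ≠ 0)).card : ℝ) := by
            rw [Finset.card_filter]; push_cast; rfl
          rw [e1]
          have e2 : (Finset.range N).filter (fun i => a i j ≠ 0)
              = (Finset.range N).filter (fun i => a j i ≠ 0) := by
            apply Finset.filter_congr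
            intro i _
            rw [hsymm i j]
          rw [e2]
          exact hdeg j hj
        · simp [hjF]
      calc ∑ j ∈ Finset.range N, ∑ i ∈ Finset.range N,
              (if a i j ≠ 0 ∧ j ∈ F then (1:ℝ) else 0)
          ≤ ∑ j ∈ Finset.range N, (if j ∈ F then D else 0) := Finset.sum_le_sum hb
        _ = ∑ j ∈ F, D := by
            rw [Finset.sum_ite_mem, Finset.inter_eq_right.mpr hFsub]
        _ = (nf : ℝ) * D := by rw [Finset.sum_const, nsmul_eq_mul, hFcard]
    linarith
  -- ∑ |n i| = 2 A nf
  have hc2 : ∑ i ∈ Finset.range N, |Sn i - Si i| = 2 * A * nf := by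
    rw [← Finset.sum_subset hFsub (fun i hi hiF => by rw [hF0 i hi hiF]; simp)]
    have habs : ∀ i ∈ F, |Sn i - Si i| = 2 * A := by
      intro i hiF
      rcases hFval i hiF with hv | hv
      · rw [hv, abs_of_pos (by positivity)]
      · rw [hv, abs_neg, abs_of_pos (by positivity)]
    rw [Finset.sum_congr rfl habs, Finset.sum_const, nsmul_eq_mul, hFcard]
    ring
  -- total error bound
  have total : ∑ i ∈ Finset.range N,
      (2 * A * Real.sqrt Δ * Real.sqrt (c i) + |Sn i - Si i| * Real.sqrt (Δ * D))
      ≤ (nf : ℝ) * B := by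
    rw [Finset.sum_add_distrib]
    have t1 : ∑ i ∈ Finset.range N, 2 * A * Real.sqrt Δ * Real.sqrt (c i)
        ≤ 2 * A * Real.sqrt Δ * ((nf : ℝ) * D) := by
      rw [← Finset.mul_sum]
      exact mul_le_mul_of_nonneg_left hc1 (by positivity)
    have t2 : ∑ i ∈ Finset.range N, |Sn i - Si i| * Real.sqrt (Δ * D)
        = 2 * A * (nf : ℝ) * Real.sqrt (Δ * D) := by
      rw [← Finset.sum_mul, hc2]
    have hDle : D ≤ D ^ ((3:ℝ)/2) := by
      calc D = D ^ (1:ℝ) := (Real.rpow_one D).symm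
        _ ≤ D ^ ((3:ℝ)/2) := Real.rpow_le_rpow_of_exponent_le hD (by norm_num)
    have t3 : 2 * A * Real.sqrt Δ * ((nf : ℝ) * D)
        ≤ (nf : ℝ) * (2 * A * D ^ ((3:ℝ)/2) * Real.sqrt Δ) := by
      have h0 : 0 ≤ 2 * A * Real.sqrt Δ * (nf : ℝ) := by positivity
      calc 2 * A * Real.sqrt Δ * ((nf : ℝ) * D)
          = (2 * A * Real.sqrt Δ * (nf : ℝ)) * D := by ring
        _ ≤ (2 * A * Real.sqrt Δ * (nf : ℝ)) * D ^ ((3:ℝ)/2) :=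
            mul_le_mul_of_nonneg_left hDle h0
        _ = (nf : ℝ) * (2 * A * D ^ ((3:ℝ)/2) * Real.sqrt Δ) := by ring
    rw [hBdef, t2]
    have := t1.trans t3
    nlinarith [this]
  linarith
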